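/- For every n ≥ 1, the power set of [n] = {1,…,n} can be partitioned into exactly binomial(n, ⌊n/2⌋) symmetric chains, where a symmetric chain is a sequence of subsets A_1 ⊂ A_2 ⊂ ⋯ ⊂ A_k with |A_{j+1}| = |A_j| + 1 for each j and |A_1| + |A_k| = n. -/

import Mathlib

namespace SCDaux

open Finset

variable {α : Type*} [DecidableEq α]
set_option linter.unusedSectionVars false

/-- The covering relation used in symmetric chains. -/
def R (A B : Finset α) : Prop := A ⊆ B ∧ B.card = A.card + 1

lemma card_getLast : ∀ (L : List (Finset α)) (h : L ≠ []), L.Chain' R →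
    (L.getLast h).card = (L.head h).card + (L.length - 1)
  | [a], _, _ => by simp
  | a :: b :: l, _, hc => by
    have hc' := List.isChain_cons_cons.mp hc
    have ih := card_getLast (b :: l) (by simp) hc'.2
    rw [List.getLast_cons (by simp)]
    simp only [List.head_cons, List.length_cons] at ih ⊢
    have := hc'.1.2
    omega

lemma card_le_getLast : ∀ (L : List (Finset α)) (h : L ≠ []), L.Chain' R →
    ∀ X ∈ L, X.card ≤ (L.getLast h).card
  | [a], _, _, X, hX => by simp_all
  | a :: b :: l, _, hc, X, hX => by
    have hc' := List.isChain_cons_cons.mp hc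
    have ih := card_le_getLast (b :: l) (by simp) hc'.2
    rw [List.getLast_cons (by simp)]
    rcases List.mem_cons.mp hX with rfl | hX
    · have h1 := hc'.1.2
      have h2 := ih b (by simp)
      omega
    · exact ih X hX

lemma card_lt_getLast : ∀ (L : List (Finset α)) (h : L ≠ []), L.Chain' R →
    ∀ X ∈ L.dropLast, X.card < (L.getLast h).card
  | [a], _, _, X, hX => by simp at hX
  | a :: b :: l, _, hc, X, hX => by
    have hc' := List.isChain_cons_cons.mp hc
    have ih := card_lt_getLast (b :: l) (by simp) hc'.2
    rw [List.getLast_cons (by simp)]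
    rw [List.dropLast_cons₂] at hX
    rcases List.mem_cons.mp hX with rfl | hX
    · have h1 := hc'.1.2
      have h2 := card_le_getLast (b :: l) (by simp) hc'.2 b (by simp)
      omega
    · exact ih X hX

lemma exists_card : ∀ (L : List (Finset α)) (h : L ≠ []), L.Chain' R →
    ∀ c, (L.head h).card ≤ c → c ≤ (L.getLast h).card → ∃ X ∈ L, X.card = c
  | [a], _, _, c, h1, h2 => ⟨a, by simp, by simp at h1 h2; omega⟩
  | a :: b :: l, _, hc, c, h1, h2 => by
    have hc' := List.isChain_cons_cons.mp hc
    rw [List.getLast_cons (by simp)] at h2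
    simp only [List.head_cons] at h1
    rcases eq_or_lt_of_le h1 with heq | hlt
    · exact ⟨a, by simp, heq⟩
    · obtain ⟨X, hX, hXc⟩ := exists_card (b :: l) (by simp) hc'.2 c
        (by simp only [List.head_cons]; have := hc'.1.2; omega) h2
      exact ⟨X, List.mem_cons_of_mem _ hX, hXc⟩

lemma card_injOn (L : List (Finset α)) (hc : L.Chain' R) :
    ∀ X ∈ L, ∀ Y ∈ L, X.card = Y.card → X = Y := by
  haveI : IsTrans (Finset α) (fun A B : Finset α => A.card < B.card) :=
    ⟨fun _ _ _ hab hbc => lt_trans hab hbc⟩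
  have h1 : L.Chain' (fun A B : Finset α => A.card < B.card) :=
    hc.imp (fun a b h => by have := h.2; omega)
  have h2 := List.isChain_iff_pairwise.mp h1
  have h3 : L.Pairwise (fun A B : Finset α => A.card ≠ B.card) :=
    h2.imp (fun h => by omega)
  intro X hX Y hY hcard
  by_contra hne
  haveI : Std.Symm (fun A B : Finset α => A.card ≠ B.card) := ⟨fun _ _ h => Ne.symm h⟩
  exact h3.forall hX hY hne hcard

lemma chain'_map {β : Type*} [DecidableEq β] (f : Finset α → Finset β) :
    ∀ (L : List (Finset α)), (∀ A ∈ L, ∀ B ∈ L, R A B → R (f A) (f B)) →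
      L.Chain' R → (L.map f).Chain' R
  | [], _, _ => List.isChain_nil
  | [a], _, _ => List.isChain_singleton _
  | a :: b :: l, hf, hc => by
    have hc' := List.isChain_cons_cons.mp hc
    simp only [List.map_cons]
    refine List.isChain_cons_cons.mpr ⟨hf a (by simp) b (by simp) hc'.1, ?_⟩
    have := chain'_map f (b :: l) (fun A hA B hB => hf A (by simp [hA]) B (by simp [hB])) hc'.2
    exact this

end SCDaux

namespace SCDaux

def goodN (n : ℕ) (C : Finset (List (Finset ℕ))) : Prop :=
  (∀ L ∈ C, L ≠ [] ∧ L.Chain' R ∧ ∀ h : L ≠ [], (L.head h).card + (L.getLast h).card = n) ∧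
  (∀ L ∈ C, ∀ A ∈ L, A ⊆ Finset.range n) ∧
  ∀ A : Finset ℕ, A ⊆ Finset.range n → ∃! L, L ∈ C ∧ A ∈ L

lemma goodN_zero : goodN 0 {[(∅ : Finset ℕ)]} := by
  refine ⟨?_, ?_, ?_⟩
  · intro L hL
    simp only [Finset.mem_singleton] at hL
    subst hL
    exact ⟨by simp, List.isChain_singleton _, by simp⟩
  · intro L hL A hA
    simp only [Finset.mem_singleton] at hL
    subst hL
    simp at hA
    simp [hA]
  · intro A hA
    have : A = ∅ := by simpa [Finset.subset_empty] using hA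
    subst this
    exact ⟨[∅], ⟨by simp, by simp⟩, fun M hM => by simpa using hM.1⟩

lemma goodN_succ {n : ℕ} {C : Finset (List (Finset ℕ))} (hg : goodN n C) :
    ∃ C', goodN (n + 1) C' := by
  classical
  obtain ⟨hsym, hsub, hcov⟩ := hg
  -- n is not in any set of any chain
  have hnot : ∀ L ∈ C, ∀ A ∈ L, n ∉ A := by
    intro L hL A hA hmem
    exact absurd (Finset.mem_range.mp (hsub L hL A hA hmem)) (lt_irrefl n)
  set ext : List (Finset ℕ) → List (Finset ℕ) :=
    fun L => L ++ [insert n (L.getLastD ∅)] with hext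
  set shr : List (Finset ℕ) → List (Finset ℕ) :=
    fun L => (L.map (insert n)).dropLast with hshr
  have hgetD' : ∀ (L : List (Finset ℕ)) (h : L ≠ []), L.getLast?.getD ∅ = L.getLast h := by
    intro L h
    rw [List.getLast?_eq_getLast h]
    rfl
  have hgetD : ∀ (L : List (Finset ℕ)) (h : L ≠ []), L.getLastD ∅ = L.getLast h := by
    intro L h
    rw [List.getLastD_eq_getLast?]
    exact hgetD' L h
  have key_last : ∀ (l : List (Finset ℕ)) (x : Finset ℕ) (h : l ++ [x] ≠ []),
      (l ++ [x]).getLast h = x := by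
    intro l x h
    simp [List.getLast_append]
  have key_head : ∀ (l : List (Finset ℕ)) (x : Finset ℕ) (hl : l ≠ []) (h : l ++ [x] ≠ []),
      (l ++ [x]).head h = l.head hl := by
    intro l x hl h
    simp [List.head_append, hl]
  -- basic facts about ext
  have hext_ne : ∀ L : List (Finset ℕ), ext L ≠ [] := by
    intro L
    simp [hext]
  have hext_last : ∀ (L : List (Finset ℕ)) (h : L ≠ []),
      (ext L).getLast (hext_ne L) = insert n (L.getLast h) := by
    intro L h
    exact (key_last L _ (hext_ne L)).trans (by rw [hgetD L h])
  have hext_head : ∀ (L : List (Finset ℕ)) (h : L ≠ []),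
      (ext L).head (hext_ne L) = L.head h := by
    intro L h
    exact key_head L _ h (hext_ne L)
  have hmem_shr : ∀ (L : List (Finset ℕ)) (A : Finset ℕ),
      A ∈ shr L ↔ ∃ X ∈ L.dropLast, insert n X = A := by
    intro L A
    rw [hshr]
    simp only [← List.map_dropLast, List.mem_map]
  have hmemC' : ∀ M, M ∈ C.image ext ∪ (C.filter fun L => 2 ≤ L.length).image shr ↔
      (∃ L ∈ C, ext L = M) ∨ ∃ L ∈ C, 2 ≤ L.length ∧ shr L = M := by
    intro M
    simp only [Finset.mem_union, Finset.mem_image, Finset.mem_filter]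
    constructor
    · rintro (⟨L, hL, rfl⟩ | ⟨L, ⟨hL, h2⟩, rfl⟩)
      · exact Or.inl ⟨L, hL, rfl⟩
      · exact Or.inr ⟨L, hL, h2, rfl⟩
    · rintro (⟨L, hL, rfl⟩ | ⟨L, hL, h2, rfl⟩)
      · exact Or.inl ⟨L, hL, rfl⟩
      · exact Or.inr ⟨L, ⟨hL, h2⟩, rfl⟩
  have hRins : ∀ L ∈ C, ∀ A ∈ L, ∀ B ∈ L, R A B → R (insert n A) (insert n B) := by
    intro L hL A hA B hB hAB
    refine ⟨Finset.insert_subset_insert _ hAB.1, ?_⟩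
    rw [Finset.card_insert_of_notMem (hnot L hL A hA),
      Finset.card_insert_of_notMem (hnot L hL B hB), hAB.2]
  have hshr_len : ∀ L : List (Finset ℕ), (shr L).length = L.length - 1 := by
    intro L
    simp [hshr]
  have hshr_ne : ∀ L : List (Finset ℕ), 2 ≤ L.length → shr L ≠ [] := by
    intro L h2
    apply List.ne_nil_of_length_pos
    rw [hshr_len]
    omega
  have hshr_chain : ∀ L ∈ C, (shr L).Chain' R := by
    intro L hL
    show List.Chain' R ((List.map (insert n) L).dropLast)
    rw [List.dropLast_eq_take]
    exact List.IsChain.take (chain'_map (insert n) L (hRins L hL) (hsym L hL).2.1) _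
  -- symmetric chain property for members of C'
  refine ⟨C.image ext ∪ (C.filter fun L => 2 ≤ L.length).image shr, ?_, ?_, ?_⟩
  · intro M hM
    rcases (hmemC' M).mp hM with ⟨L, hL, rfl⟩ | ⟨L, hL, h2, rfl⟩
    · obtain ⟨hne, hc, hsum⟩ := hsym L hL
      refine ⟨hext_ne L, ?_, ?_⟩
      · rw [hext]
        refine List.isChain_append.mpr ⟨hc, by simp, ?_⟩
        intro x hx y hy
        rw [List.getLast?_eq_getLast hne] at hx
        simp at hx hy
        subst hx
        subst hy
        rw [hgetD' L hne]
        exact ⟨Finset.subset_insert _ _,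
          Finset.card_insert_of_notMem (hnot L hL _ (List.getLast_mem hne))⟩
      · intro _
        rw [hext_head L hne, hext_last L hne,
          Finset.card_insert_of_notMem (hnot L hL _ (List.getLast_mem hne)),
          ← Nat.add_assoc, hsum hne]
    · obtain ⟨hne, hc, hsum⟩ := hsym L hL
      refine ⟨hshr_ne L h2, hshr_chain L hL, ?_⟩
      intro _
      have hhead : (shr L).head (hshr_ne L h2) = insert n (L.head hne) := by
        show ((List.map (insert n) L).dropLast).head (hshr_ne L h2) = _
        rw [List.head_dropLast, List.head_map]
      have hlastL := card_getLast L hne hc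
      have hlast := card_getLast (shr L) (hshr_ne L h2) (hshr_chain L hL)
      rw [hhead] at hlast ⊢
      rw [Finset.card_insert_of_notMem (hnot L hL _ (List.head_mem hne))] at hlast ⊢
      rw [hshr_len] at hlast
      have hs := hsum hne
      omega
  -- all members are subsets of range (n+1)
  · intro M hM A hA
    have hstep : ∀ B ⊆ Finset.range n, insert n B ⊆ Finset.range (n + 1) := by
      intro B hB
      refine Finset.insert_subset (by simp) (hB.trans ?_)
      intro x hx
      simp only [Finset.mem_range] at hx ⊢
      omega
    have hsub' : ∀ L ∈ C, ∀ X ∈ L, X ⊆ Finset.range (n + 1) := by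
      intro L hL X hX
      refine (hsub L hL X hX).trans ?_
      intro x hx
      simp only [Finset.mem_range] at hx ⊢
      omega
    rcases (hmemC' M).mp hM with ⟨L, hL, rfl⟩ | ⟨L, hL, h2, rfl⟩
    · rw [hext] at hA
      rcases List.mem_append.mp hA with hA | hA
      · exact hsub' L hL A hA
      · have hne := (hsym L hL).1
        simp only [List.mem_singleton] at hA
        subst hA
        rw [hgetD L hne]
        exact hstep _ (hsub L hL _ (List.getLast_mem hne))
    · obtain ⟨X, hX, rfl⟩ := (hmem_shr L A).mp hA
      exact hstep _ (hsub L hL X (List.mem_of_mem_dropLast hX))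
  -- cover
  · intro A hA
    by_cases hnA : n ∈ A
    · -- A contains n
      set B := A.erase n with hB
      have hBr : B ⊆ Finset.range n := by
        intro x hx
        have h1 := Finset.mem_of_mem_erase hx
        have h2 := Finset.ne_of_mem_erase hx
        have := Finset.mem_range.mp (hA h1)
        simp only [Finset.mem_range]
        omega
      have hAB : A = insert n B := by
        rw [hB, Finset.insert_erase hnA]
      obtain ⟨L, ⟨hL, hBL⟩, huniq⟩ := hcov B hBr
      obtain ⟨hne, hc, hsum⟩ := hsym L hL
      have herase : ∀ X : Finset ℕ, n ∉ X → (insert n X).erase n = X := fun X hX =>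
        Finset.erase_insert hX
      by_cases hBlast : B = L.getLast hne
      · refine ⟨ext L, ⟨(hmemC' _).mpr (Or.inl ⟨L, hL, rfl⟩), ?_⟩, ?_⟩
        · rw [hext]
          refine List.mem_append.mpr (Or.inr ?_)
          simp only [List.mem_singleton]
          rw [hgetD L hne, hAB, hBlast]
        · rintro M ⟨hM, hAM⟩
          rcases (hmemC' M).mp hM with ⟨L', hL', rfl⟩ | ⟨L', hL', h2', rfl⟩
          · have hne' := (hsym L' hL').1
            rw [hext] at hAM
            rcases List.mem_append.mp hAM with hAM | hAM
            · exact absurd hnA (hnot L' hL' A hAM)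
            · simp only [List.mem_singleton] at hAM
              rw [hgetD L' hne'] at hAM
              have : B = L'.getLast hne' := by
                rw [hB, hAM, herase _ (hnot L' hL' _ (List.getLast_mem hne'))]
              have hLL : L' = L := huniq L' ⟨hL', this ▸ List.getLast_mem hne'⟩
              subst hLL
              rfl
          · obtain ⟨X, hX, hXA⟩ := (hmem_shr L' A).mp hAM
            have hXmem := List.mem_of_mem_dropLast hX
            have hXB : X = B := by
              rw [hB, ← hXA, herase _ (hnot L' hL' X hXmem)]
            subst hXB
            have hLL : L' = L := huniq L' ⟨hL', hXmem⟩
            subst hLL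
            exfalso
            have := card_lt_getLast L' hne hc B hX
            rw [← hBlast] at this
            omega
      · -- B is not the last element of L
        have hBd : B ∈ L.dropLast := by
          have hsplit := List.dropLast_append_getLast hne
          rw [← hsplit] at hBL
          rcases List.mem_append.mp hBL with h | h
          · exact h
          · simp only [List.mem_singleton] at h
            exact absurd h hBlast
        have h2 : 2 ≤ L.length := by
          have h1 : 0 < L.dropLast.length := List.length_pos_iff.mpr (List.ne_nil_of_mem hBd)
          have h3 : 0 < L.length := List.length_pos_iff.mpr hne
          rw [List.length_dropLast] at h1
          omega
        refine ⟨shr L, ⟨(hmemC' _).mpr (Or.inr ⟨L, hL, h2, rfl⟩), ?_⟩, ?_⟩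
        · exact (hmem_shr L A).mpr ⟨B, hBd, hAB.symm⟩
        · rintro M ⟨hM, hAM⟩
          rcases (hmemC' M).mp hM with ⟨L', hL', rfl⟩ | ⟨L', hL', h2', rfl⟩
          · have hne' := (hsym L' hL').1
            rw [hext] at hAM
            rcases List.mem_append.mp hAM with hAM | hAM
            · exact absurd hnA (hnot L' hL' A hAM)
            · simp only [List.mem_singleton] at hAM
              rw [hgetD L' hne'] at hAM
              have hBlast' : B = L'.getLast hne' := by
                rw [hB, hAM, herase _ (hnot L' hL' _ (List.getLast_mem hne'))]
              have hLL : L' = L := huniq L' ⟨hL', hBlast' ▸ List.getLast_mem hne'⟩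
              subst hLL
              exact absurd hBlast' hBlast
          · obtain ⟨X, hX, hXA⟩ := (hmem_shr L' A).mp hAM
            have hXmem := List.mem_of_mem_dropLast hX
            have hXB : X = B := by
              rw [hB, ← hXA, herase _ (hnot L' hL' X hXmem)]
            subst hXB
            have hLL : L' = L := huniq L' ⟨hL', hXmem⟩
            subst hLL
            rfl
    · -- n not in A
      have hAr : A ⊆ Finset.range n := by
        intro x hx
        have h1 := Finset.mem_range.mp (hA hx)
        have h2 : x ≠ n := fun h => hnA (h ▸ hx)
        simp only [Finset.mem_range]
        omega
      obtain ⟨L, ⟨hL, hAL⟩, huniq⟩ := hcov A hAr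
      refine ⟨ext L, ⟨(hmemC' _).mpr (Or.inl ⟨L, hL, rfl⟩), ?_⟩, ?_⟩
      · rw [hext]
        exact List.mem_append.mpr (Or.inl hAL)
      · rintro M ⟨hM, hAM⟩
        rcases (hmemC' M).mp hM with ⟨L', hL', rfl⟩ | ⟨L', hL', h2', rfl⟩
        · have hne' := (hsym L' hL').1
          rw [hext] at hAM
          rcases List.mem_append.mp hAM with hAM | hAM
          · have hLL : L' = L := huniq L' ⟨hL', hAM⟩
            subst hLL
            rfl
          · simp only [List.mem_singleton] at hAM
            rw [hgetD L' hne'] at hAM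
            exact absurd (hAM ▸ Finset.mem_insert_self n _) hnA
        · obtain ⟨X, hX, hXA⟩ := (hmem_shr L' A).mp hAM
          exact absurd (hXA ▸ Finset.mem_insert_self n X) hnA

end SCDaux

namespace SCDaux

lemma exists_goodN : ∀ n : ℕ, ∃ C, goodN n C
  | 0 => ⟨_, goodN_zero⟩
  | n + 1 => by
    obtain ⟨C, hC⟩ := exists_goodN n
    exact goodN_succ hC

end SCDaux

/-- `L` is a symmetric chain in the power set of `[n]`: a nonempty sequence of subsets
`A₁ ⊂ A₂ ⊂ ⋯ ⊂ A_k` with `|A_{j+1}| = |A_j| + 1` for each `j` and `|A₁| + |A_k| = n`. -/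
def IsSymmetricChain (n : ℕ) (L : List (Finset (Fin n))) : Prop :=
  L ≠ [] ∧ L.Chain' (fun A B => A ⊆ B ∧ B.card = A.card + 1) ∧
    ∀ h : L ≠ [], (L.head h).card + (L.getLast h).card = n

/-- For every `n ≥ 1`, the power set of `[n]` can be partitioned into exactly
`binomial(n, ⌊n/2⌋)` symmetric chains: every subset of `[n]` lies in exactly one chain. -/
theorem symmetric_chain_decomposition (n : ℕ) (hn : 1 ≤ n) :
    ∃ chains : Finset (List (Finset (Fin n))),
      chains.card = n.choose (n / 2) ∧
      (∀ L ∈ chains, IsSymmetricChain n L) ∧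
      (∀ A : Finset (Fin n), ∃! L : List (Finset (Fin n)), L ∈ chains ∧ A ∈ L) := by
  classical
  open SCDaux in
  obtain ⟨C, hsym, hsub, hcov⟩ := SCDaux.exists_goodN n
  set d : Finset ℕ → Finset (Fin n) :=
    fun A => Finset.univ.filter (fun i : Fin n => (i : ℕ) ∈ A) with hd
  set u : Finset (Fin n) → Finset ℕ := fun B => B.image Fin.val with hu
  have hmemd : ∀ (A : Finset ℕ) (i : Fin n), i ∈ d A ↔ (i : ℕ) ∈ A := by
    intro A i
    simp [hd]
  have hdu : ∀ B : Finset (Fin n), d (u B) = B := by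
    intro B
    ext i
    rw [hmemd]
    simp only [hu, Finset.mem_image]
    exact ⟨fun ⟨j, hj, hji⟩ => by rwa [← Fin.val_injective hji], fun h => ⟨i, h, rfl⟩⟩
  have hur : ∀ B : Finset (Fin n), u B ⊆ Finset.range n := by
    intro B x hx
    simp only [hu, Finset.mem_image] at hx
    obtain ⟨j, _, rfl⟩ := hx
    simpa using j.isLt
  have hud : ∀ A ⊆ Finset.range n, u (d A) = A := by
    intro A hA
    ext x
    simp only [hu, Finset.mem_image]
    constructor
    · rintro ⟨i, hi, rfl⟩
      exact (hmemd A i).mp hi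
    · intro hx
      have hxn : x < n := Finset.mem_range.mp (hA hx)
      exact ⟨⟨x, hxn⟩, (hmemd A ⟨x, hxn⟩).mpr hx, rfl⟩
  have hcard : ∀ A ⊆ Finset.range n, (d A).card = A.card := by
    intro A hA
    have h1 : (u (d A)).card = (d A).card := Finset.card_image_of_injective _ Fin.val_injective
    rw [hud A hA] at h1
    exact h1.symm
  have hdinj : ∀ A ⊆ Finset.range n, ∀ B ⊆ Finset.range n, d A = d B → A = B := by
    intro A hA B hB h
    rw [← hud A hA, ← hud B hB, h]
  -- the chains
  refine ⟨C.image (fun L => L.map d), ?_, ?_, ?_⟩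
  rotate_left
  · -- symmetric chains
    intro M hM
    obtain ⟨L, hL, rfl⟩ := Finset.mem_image.mp hM
    obtain ⟨hne, hc, hsum⟩ := hsym L hL
    have hne' : L.map d ≠ [] := by simpa using hne
    refine ⟨hne', ?_, ?_⟩
    · exact chain'_map d L (fun A hA B hB hAB =>
        ⟨fun i hi => (hmemd B i).mpr (hAB.1 ((hmemd A i).mp hi)),
          by rw [hcard A (hsub L hL A hA), hcard B (hsub L hL B hB), hAB.2]⟩) hc
    · intro _
      rw [List.head_map, List.getLast_map,
        hcard _ (hsub L hL _ (List.head_mem hne)),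
        hcard _ (hsub L hL _ (List.getLast_mem hne))]
      exact hsum hne
  · -- cover
    intro A
    obtain ⟨L, ⟨hL, hAL⟩, huniq⟩ := hcov (u A) (hur A)
    refine ⟨L.map d, ⟨Finset.mem_image_of_mem _ hL, ?_⟩, ?_⟩
    · rw [← hdu A]
      exact List.mem_map_of_mem (f := d) hAL
    · rintro M ⟨hM, hAM⟩
      obtain ⟨L', hL', rfl⟩ := Finset.mem_image.mp hM
      obtain ⟨X, hX, rfl⟩ := List.mem_map.mp hAM
      have : u (d X) = X := hud X (hsub L' hL' X hX)
      have hLL : L' = L := huniq L' ⟨hL', by rw [this]; exact hX⟩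
      rw [hLL]
  · -- count
    have hsymfin : ∀ M ∈ C.image (fun L => L.map d), IsSymmetricChain n M := by
      intro M hM
      obtain ⟨L, hL, rfl⟩ := Finset.mem_image.mp hM
      obtain ⟨hne, hc, hsum⟩ := hsym L hL
      have hne' : L.map d ≠ [] := by simpa using hne
      refine ⟨hne', ?_, ?_⟩
      · exact chain'_map d L (fun A hA B hB hAB =>
          ⟨fun i hi => (hmemd B i).mpr (hAB.1 ((hmemd A i).mp hi)),
            by rw [hcard A (hsub L hL A hA), hcard B (hsub L hL B hB), hAB.2]⟩) hc
      · intro _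
        rw [List.head_map, List.getLast_map,
          hcard _ (hsub L hL _ (List.head_mem hne)),
          hcard _ (hsub L hL _ (List.getLast_mem hne))]
        exact hsum hne
    have hcovfin : ∀ A : Finset (Fin n),
        ∃! M, M ∈ C.image (fun L => L.map d) ∧ A ∈ M := by
      intro A
      obtain ⟨L, ⟨hL, hAL⟩, huniq⟩ := hcov (u A) (hur A)
      refine ⟨L.map d, ⟨Finset.mem_image_of_mem _ hL, ?_⟩, ?_⟩
      · rw [← hdu A]
        exact List.mem_map_of_mem (f := d) hAL
      · rintro M ⟨hM, hAM⟩
        obtain ⟨L', hL', rfl⟩ := Finset.mem_image.mp hM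
        obtain ⟨X, hX, rfl⟩ := List.mem_map.mp hAM
        have : u (d X) = X := hud X (hsub L' hL' X hX)
        have hLL : L' = L := huniq L' ⟨hL', by rw [this]; exact hX⟩
        rw [hLL]
    have hbij : (Finset.powersetCard (n / 2) (Finset.univ : Finset (Fin n))).card =
        (C.image (fun L => L.map d)).card := by
      apply Finset.card_bij (fun A _ => (hcovfin A).choose)
      · intro A hA
        exact (hcovfin A).choose_spec.1.1
      · intro A₁ hA₁ A₂ hA₂ h
        have m1 := (hcovfin A₁).choose_spec.1
        have m2 := (hcovfin A₂).choose_spec.1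
        rw [h] at m1
        have hchain := (hsymfin _ m2.1).2.1
        have hc1 := Finset.mem_powersetCard_univ.mp hA₁
        have hc2 := Finset.mem_powersetCard_univ.mp hA₂
        exact card_injOn _ hchain A₁ m1.2 A₂ m2.2 (by rw [hc1, hc2])
      · intro M hM
        obtain ⟨hne, hc, hsum⟩ := hsymfin M hM
        have hlast := card_getLast M hne hc
        have hle : (M.head hne).card ≤ n / 2 ∧ n / 2 ≤ (M.getLast hne).card := by
          have := hsum hne
          omega
        obtain ⟨X, hXM, hXc⟩ := exists_card M hne hc (n / 2) hle.1 hle.2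
        refine ⟨X, Finset.mem_powersetCard_univ.mpr hXc, ?_⟩
        exact ((hcovfin X).choose_spec.2 M ⟨hM, hXM⟩).symm
    rw [← hbij, Finset.card_powersetCard]
    simp
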